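/- Let φ₁ and φ₂ be hybrid arcs with dom φ₁ a compact hybrid time domain, such that φ₁(T,J) = φ₂(0,0) where (T,J) = max dom φ₁. Then their concatenation φ = φ₁|φ₂ satisfies: for each j ∈ ℕ, the function t ↦ φ(t,j) is locally absolutely continuous on the interval I^j_φ := {t : (t,j) ∈ dom φ}. -/

import Mathlib

open MeasureTheory Set

noncomputable section

/-- State/input space: `ℝ^k` with the Euclidean norm. -/
abbrev Vec (k : ℕ) : Type := EuclideanSpace ℝ (Fin k)

/-- A set `E ⊆ ℝ × ℕ` is a compact hybrid time domain if
`E = ⋃_{j=0}^{J} ([t_j, t_{j+1}] × {j})` for some `J ∈ ℕ` and a finite nondecreasing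
sequence `0 = t_0 ≤ t_1 ≤ ... ≤ t_{J+1}`. -/
def IsCompactHTD (E : Set (ℝ × ℕ)) : Prop :=
  ∃ (J : ℕ) (t : ℕ → ℝ), t 0 = 0 ∧ (∀ i, i ≤ J → t i ≤ t (i + 1)) ∧
    E = ⋃ j ∈ Finset.range (J + 1), Set.Icc (t j) (t (j + 1)) ×ˢ ({j} : Set ℕ)

/-- A hybrid time domain is the union of a nondecreasing sequence of compact
hybrid time domains. -/
def IsHTD (E : Set (ℝ × ℕ)) : Prop :=
  ∃ F : ℕ → Set (ℝ × ℕ), (∀ k, IsCompactHTD (F k)) ∧ Monotone F ∧ E = ⋃ k, F k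

/-- The time slice `I^j = {t : (t,j) ∈ E}`. -/
def Slice (E : Set (ℝ × ℕ)) (j : ℕ) : Set ℝ := {t | (t, j) ∈ E}

/-- `(T,J) = max E` for a (compact) hybrid time domain `E`. -/
def IsMaxOf (E : Set (ℝ × ℕ)) (T : ℝ) (J : ℕ) : Prop :=
  (T, J) ∈ E ∧ ∀ p ∈ E, p.1 ≤ T ∧ p.2 ≤ J

/-- `s` is Lebesgue measurable on `S`: preimages (within `S`) of open sets are
Lebesgue measurable subsets of `ℝ`. -/
def LebesgueMeasurableOn {k : ℕ} (s : ℝ → Vec k) (S : Set ℝ) : Prop :=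
  ∀ U : Set (Vec k), IsOpen U → NullMeasurableSet {t | t ∈ S ∧ s t ∈ U} volume

/-- `s` is locally essentially bounded on `S`. -/
def LocallyEssBddOn {k : ℕ} (s : ℝ → Vec k) (S : Set ℝ) : Prop :=
  ∀ r ∈ S, ∃ U : Set ℝ, IsOpen U ∧ r ∈ U ∧ ∃ c : ℝ, 0 ≤ c ∧
    ∀ᵐ t ∂(volume.restrict (U ∩ S)), ‖s t‖ ≤ c

/-- `s` is absolutely continuous on `[a,b]`: for each `ε > 0` there is `δ > 0` such
that every countable collection of disjoint subintervals of `[a,b]` of total length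
at most `δ` has total variation of `s` at most `ε`. -/
def AbsContOn {k : ℕ} (s : ℝ → Vec k) (a b : ℝ) : Prop :=
  ∀ ε : ℝ, 0 < ε → ∃ δ : ℝ, 0 < δ ∧ ∀ I : ℕ → ℝ × ℝ,
    (∀ i, a ≤ (I i).1 ∧ (I i).1 ≤ (I i).2 ∧ (I i).2 ≤ b) →
    (∀ i i', i ≠ i' → Disjoint (Set.Ioo (I i).1 (I i).2) (Set.Ioo (I i').1 (I i').2)) →
    (∑' i, ((I i).2 - (I i).1)) ≤ δ →
    (∑' i, ‖s (I i).2 - s (I i).1‖) ≤ ε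

/-- `s` is locally absolutely continuous on `S`: absolutely continuous on every
compact subinterval of `S`. -/
def LocAbsContOn {k : ℕ} (s : ℝ → Vec k) (S : Set ℝ) : Prop :=
  ∀ a b : ℝ, a ≤ b → Set.Icc a b ⊆ S → AbsContOn s a b

/-- `s` is locally bounded on `S`. -/
def LocallyBoundedOn {k : ℕ} (s : ℝ → Vec k) (S : Set ℝ) : Prop :=
  ∀ t₀ ∈ S, ∃ A ∈ nhds t₀, ∃ M : ℝ, 0 < M ∧ ∀ t ∈ A ∩ S, ‖s t‖ ≤ M

/-- A hybrid input: a function on a hybrid time domain `E` that is Lebesgue measurable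
and locally essentially bounded on each time slice. -/
def IsHybridInput {m : ℕ} (υ : ℝ → ℕ → Vec m) (E : Set (ℝ × ℕ)) : Prop :=
  IsHTD E ∧ ∀ j : ℕ,
    LebesgueMeasurableOn (fun t => υ t j) (Slice E j) ∧
    LocallyEssBddOn (fun t => υ t j) (Slice E j)

/-- A hybrid arc: a function on a hybrid time domain `E` that is locally absolutely
continuous on each time slice. -/
def IsHybridArc {n : ℕ} (φ : ℝ → ℕ → Vec n) (E : Set (ℝ × ℕ)) : Prop :=
  IsHTD E ∧ ∀ j : ℕ, LocAbsContOn (fun t => φ t j) (Slice E j)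

/-- A hybrid system `H = (C, f, D, g)`. -/
structure HybridSystem (n m : ℕ) where
  C : Set (Vec n × Vec m)
  f : Vec n × Vec m → Vec n
  D : Set (Vec n × Vec m)
  g : Vec n × Vec m → Vec n

/-- `(φ, υ)` with common domain `E` is a solution pair to `H`. -/
def IsSolutionPair {n m : ℕ} (H : HybridSystem n m)
    (φ : ℝ → ℕ → Vec n) (υ : ℝ → ℕ → Vec m) (E : Set (ℝ × ℕ)) : Prop :=
  IsHybridArc φ E ∧ IsHybridInput υ E ∧
  (φ 0 0, υ 0 0) ∈ closure H.C ∪ H.D ∧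
  (∀ j : ℕ, (interior (Slice E j)).Nonempty →
    (∀ t ∈ interior (Slice E j), (φ t j, υ t j) ∈ H.C) ∧
    (∀ᵐ t ∂(volume.restrict (Slice E j)),
      HasDerivWithinAt (fun s => φ s j) (H.f (φ t j, υ t j)) (Slice E j) t)) ∧
  (∀ p : ℝ × ℕ, p ∈ E → (p.1, p.2 + 1) ∈ E →
    (φ p.1 p.2, υ p.1 p.2) ∈ H.D ∧ φ p.1 (p.2 + 1) = H.g (φ p.1 p.2, υ p.1 p.2))

/-- Backward-in-time jump map `g^bw(x,u) = {z : x = g(z,u), (z,u) ∈ D}`. -/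
def gbw {n m : ℕ} (H : HybridSystem n m) (x : Vec n) (u : Vec m) : Set (Vec n) :=
  {z | x = H.g (z, u) ∧ (z, u) ∈ H.D}

/-- Backward-in-time jump set `D^bw`. -/
def Dbw {n m : ℕ} (H : HybridSystem n m) : Set (Vec n × Vec m) :=
  {p | ∃ z : Vec n, p.1 = H.g (z, p.2) ∧ (z, p.2) ∈ H.D}

/-- `(φ, υ)` with common domain `E` is a solution pair to the backward-in-time
system `H^bw = (C, -f, D^bw, g^bw)` of `H` (the jump inclusion is set-valued). -/
def IsBwSolutionPair {n m : ℕ} (H : HybridSystem n m)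
    (φ : ℝ → ℕ → Vec n) (υ : ℝ → ℕ → Vec m) (E : Set (ℝ × ℕ)) : Prop :=
  IsHybridArc φ E ∧ IsHybridInput υ E ∧
  (φ 0 0, υ 0 0) ∈ closure H.C ∪ Dbw H ∧
  (∀ j : ℕ, (interior (Slice E j)).Nonempty →
    (∀ t ∈ interior (Slice E j), (φ t j, υ t j) ∈ H.C) ∧
    (∀ᵐ t ∂(volume.restrict (Slice E j)),
      HasDerivWithinAt (fun s => φ s j) (-(H.f (φ t j, υ t j))) (Slice E j) t)) ∧
  (∀ p : ℝ × ℕ, p ∈ E → (p.1, p.2 + 1) ∈ E →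
    (φ p.1 p.2, υ p.1 p.2) ∈ Dbw H ∧ φ p.1 (p.2 + 1) ∈ gbw H (φ p.1 p.2) (υ p.1 p.2))

/-- Minkowski sum `E + {(T,J)}`. -/
def Shift (E : Set (ℝ × ℕ)) (T : ℝ) (J : ℕ) : Set (ℝ × ℕ) :=
  {p | ∃ q ∈ E, p = (q.1 + T, q.2 + J)}

/-- `ψ` with domain `E` is the concatenation `ψ₁|ψ₂`, where `(T,J) = max E₁`. -/
def IsConcat {α : Type*} (T : ℝ) (J : ℕ)
    (ψ₁ : ℝ → ℕ → α) (E₁ : Set (ℝ × ℕ))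
    (ψ₂ : ℝ → ℕ → α) (E₂ : Set (ℝ × ℕ))
    (ψ : ℝ → ℕ → α) (E : Set (ℝ × ℕ)) : Prop :=
  E = E₁ ∪ Shift E₂ T J ∧
  (∀ p ∈ E₁, p ≠ (T, J) → ψ p.1 p.2 = ψ₁ p.1 p.2) ∧
  (∀ p ∈ Shift E₂ T J, ψ p.1 p.2 = ψ₂ (p.1 - T) (p.2 - J))

/-- Minkowski difference `{(T,J)} − E`. -/
def RevDom (E : Set (ℝ × ℕ)) (T : ℝ) (J : ℕ) : Set (ℝ × ℕ) :=
  {p | ∃ q ∈ E, p = (T - q.1, J - q.2)}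

/-- `(φ', υ')` with domain `E'` is the reversal of the compact pair `(φ, υ)` with
domain `E` and `(T,J) = max E`; `C` is the flow set used in the closure condition
on `υ'(0,0)`. -/
def IsReversal {n m : ℕ} (C : Set (Vec n × Vec m)) (T : ℝ) (J : ℕ)
    (φ : ℝ → ℕ → Vec n) (υ : ℝ → ℕ → Vec m) (E : Set (ℝ × ℕ))
    (φ' : ℝ → ℕ → Vec n) (υ' : ℝ → ℕ → Vec m) (E' : Set (ℝ × ℕ)) : Prop :=
  E' = RevDom E T J ∧
  (∀ p ∈ E', φ' p.1 p.2 = φ (T - p.1) (J - p.2)) ∧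
  (∀ j : ℕ, ∀ t ∈ interior (Slice E' j), υ' t j = υ (T - t) (J - j)) ∧
  ((interior (Slice E' 0)).Nonempty → (φ' 0 0, υ' 0 0) ∈ closure C) ∧
  (∀ p : ℝ × ℕ, p ∈ E' → (p.1, p.2 + 1) ∈ E' → υ' p.1 p.2 = υ (T - p.1) (J - (p.2 + 1)))

/-- Lipschitz flow assumption with constants `Kx, Ku`. -/
def LipschitzFlow {n m : ℕ} (H : HybridSystem n m) (Kx Ku : ℝ) : Prop :=
  0 < Kx ∧ 0 < Ku ∧
  ∀ (x₀ x₁ : Vec n) (u₀ u₁ : Vec m),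
    (x₀, u₀) ∈ H.C → (x₁, u₀) ∈ H.C → (x₀, u₁) ∈ H.C →
    ‖H.f (x₀, u₀) - H.f (x₁, u₀)‖ ≤ Kx * ‖x₀ - x₁‖ ∧
    ‖H.f (x₀, u₀) - H.f (x₀, u₁)‖ ≤ Ku * ‖u₀ - u₁‖

/-- Linearly bounded jump map assumption with constants `Kx, Ku`. -/
def LinearBoundedJump {n m : ℕ} (H : HybridSystem n m) (Kx Ku : ℝ) : Prop :=
  0 < Kx ∧ 0 < Ku ∧
  ∀ (x₀ x₁ : Vec n) (u₀ u₁ : Vec m), (x₀, u₀) ∈ H.D → (x₁, u₁) ∈ H.D →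
    ‖H.g (x₀, u₀) - H.g (x₁, u₁)‖ ≤ Kx * ‖x₀ - x₁‖ + Ku * ‖u₀ - u₁‖

/-- `φ` with domain `F ⊆ E'` is a reconstructed solution with input `υ'` (defined on
`E'`) and initial condition `x0`: it starts at `x0`, flows according to
`f(·, υ')` on each nondegenerate slice, and jumps according to `g(·, υ')`. -/
def IsReconSolution {n m : ℕ} (H : HybridSystem n m)
    (υ' : ℝ → ℕ → Vec m) (E' : Set (ℝ × ℕ)) (x0 : Vec n)
    (φ : ℝ → ℕ → Vec n) (F : Set (ℝ × ℕ)) : Prop :=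
  F ⊆ E' ∧ (0, 0) ∈ F ∧ φ 0 0 = x0 ∧ IsHTD F ∧
  (∀ j : ℕ, LocAbsContOn (fun t => φ t j) (Slice F j)) ∧
  (∀ j : ℕ, (interior (Slice F j)).Nonempty →
    ∀ᵐ t ∂(volume.restrict (Slice F j)),
      HasDerivWithinAt (fun s => φ s j) (H.f (φ t j, υ' t j)) (Slice F j) t) ∧
  (∀ p : ℝ × ℕ, p ∈ F → (p.1, p.2 + 1) ∈ F →
    φ p.1 (p.2 + 1) = H.g (φ p.1 p.2, υ' p.1 p.2))

/-- A maximal reconstructed solution: one admitting no proper extension. -/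
def IsMaximalRecon {n m : ℕ} (H : HybridSystem n m)
    (υ' : ℝ → ℕ → Vec m) (E' : Set (ℝ × ℕ)) (x0 : Vec n)
    (φ : ℝ → ℕ → Vec n) (F : Set (ℝ × ℕ)) : Prop :=
  IsReconSolution H υ' E' x0 φ F ∧
  ∀ (φ₂ : ℝ → ℕ → Vec n) (F₂ : Set (ℝ × ℕ)),
    IsReconSolution H υ' E' x0 φ₂ F₂ → F ⊆ F₂ →
    (∀ p ∈ F, φ₂ p.1 p.2 = φ p.1 p.2) → F₂ = F

section MyHelpers

lemma my_sum_len_le {a b : ℝ} {I : ℕ → ℝ × ℝ}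
    (hI : ∀ i, a ≤ (I i).1 ∧ (I i).1 ≤ (I i).2 ∧ (I i).2 ≤ b)
    (hd : ∀ i i', i ≠ i' → Disjoint (Set.Ioo (I i).1 (I i).2) (Set.Ioo (I i').1 (I i').2))
    (u : Finset ℕ) : ∑ i ∈ u, ((I i).2 - (I i).1) ≤ b - a := by
  have hab : a ≤ b := le_trans (hI 0).1 (le_trans (hI 0).2.1 (hI 0).2.2)
  have hmeas : volume (⋃ i ∈ u, Set.Ioo (I i).1 (I i).2)
      = ∑ i ∈ u, volume (Set.Ioo (I i).1 (I i).2) :=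
    measure_biUnion_finset (fun i _ i' _ h => hd i i' h) (fun i _ => measurableSet_Ioo)
  have hsub : (⋃ i ∈ u, Set.Ioo (I i).1 (I i).2) ⊆ Set.Icc a b := by
    intro x hx
    simp only [Set.mem_iUnion] at hx
    obtain ⟨i, _, hx⟩ := hx
    exact ⟨le_trans (hI i).1 hx.1.le, le_trans hx.2.le (hI i).2.2⟩
  have hle : ∑ i ∈ u, volume (Set.Ioo (I i).1 (I i).2) ≤ ENNReal.ofReal (b - a) := by
    rw [← hmeas, ← Real.volume_Icc]
    exact measure_mono hsub
  rw [← ENNReal.ofReal_le_ofReal_iff (by linarith)]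
  rw [ENNReal.ofReal_sum_of_nonneg (fun i _ => by linarith [(hI i).2.1])]
  simpa [Real.volume_Ioo] using hle

lemma my_summable_len {a b : ℝ} {I : ℕ → ℝ × ℝ}
    (hI : ∀ i, a ≤ (I i).1 ∧ (I i).1 ≤ (I i).2 ∧ (I i).2 ≤ b)
    (hd : ∀ i i', i ≠ i' → Disjoint (Set.Ioo (I i).1 (I i).2) (Set.Ioo (I i').1 (I i').2)) :
    Summable (fun i => (I i).2 - (I i).1) :=
  summable_of_sum_range_le (fun i => by linarith [(hI i).2.1])
    (fun n => my_sum_len_le hI hd (Finset.range n))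

lemma my_acon_finsum {k : ℕ} {s : ℝ → Vec k} {a b : ℝ} (hab : a ≤ b)
    (h : AbsContOn s a b) {ε : ℝ} (hε : 0 < ε) :
    ∃ δ : ℝ, 0 < δ ∧ ∀ I : ℕ → ℝ × ℝ,
      (∀ i, a ≤ (I i).1 ∧ (I i).1 ≤ (I i).2 ∧ (I i).2 ≤ b) →
      (∀ i i', i ≠ i' → Disjoint (Set.Ioo (I i).1 (I i).2) (Set.Ioo (I i').1 (I i').2)) →
      (∑' i, ((I i).2 - (I i).1)) ≤ δ →
      Summable (fun i => ‖s (I i).2 - s (I i).1‖) ∧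
      (∑' i, ‖s (I i).2 - s (I i).1‖) ≤ ε := by
  obtain ⟨δ, hδ, hP⟩ := h ε hε
  refine ⟨δ, hδ, fun I hI hd hl => ?_⟩
  have key : ∀ u : Finset ℕ, ∑ i ∈ u, ‖s (I i).2 - s (I i).1‖ ≤ ε := by
    intro u
    set I' : ℕ → ℝ × ℝ := fun i => if i ∈ u then I i else (a, a) with hI'def
    have hI'c : ∀ i, a ≤ (I' i).1 ∧ (I' i).1 ≤ (I' i).2 ∧ (I' i).2 ≤ b := by
      intro i
      by_cases hi : i ∈ u
      · simp only [hI'def, hi, if_pos]; exact hI i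
      · simp only [hI'def, hi, if_neg, not_false_iff]; exact ⟨le_rfl, le_rfl, hab⟩
    have hI'd : ∀ i i', i ≠ i' →
        Disjoint (Set.Ioo (I' i).1 (I' i).2) (Set.Ioo (I' i').1 (I' i').2) := by
      intro i i' hii
      by_cases hi : i ∈ u <;> by_cases hi' : i' ∈ u <;>
        simp only [hI'def, hi, hi', if_pos, if_neg, not_false_iff, Set.Ioo_self,
          Set.disjoint_empty, Set.empty_disjoint]
      exact hd i i' hii
    have hsumlen : Summable (fun i => (I i).2 - (I i).1) := my_summable_len hI hd
    have hl' : (∑' i, ((I' i).2 - (I' i).1)) ≤ δ := by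
      have heq : (∑' i, ((I' i).2 - (I' i).1)) = ∑ i ∈ u, ((I i).2 - (I i).1) := by
        rw [tsum_eq_sum (s := u) (fun i hi => by simp [hI'def, hi])]
        exact Finset.sum_congr rfl (fun i hi => by simp [hI'def, hi])
      rw [heq]
      exact le_trans (Summable.sum_le_tsum u (fun i _ => by linarith [(hI i).2.1]) hsumlen) hl
    have := hP I' hI'c hI'd hl'
    have heq2 : (∑' i, ‖s (I' i).2 - s (I' i).1‖) = ∑ i ∈ u, ‖s (I i).2 - s (I i).1‖ := by
      rw [tsum_eq_sum (s := u) (fun i hi => by simp [hI'def, hi])]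
      exact Finset.sum_congr rfl (fun i hi => by simp [hI'def, hi])
    rwa [heq2] at this
  have hsum : Summable (fun i => ‖s (I i).2 - s (I i).1‖) :=
    summable_of_sum_range_le (fun i => norm_nonneg _) (fun n => key (Finset.range n))
  exact ⟨hsum, Summable.tsum_le_of_sum_le hsum key⟩

lemma my_acon_congr {k : ℕ} {s s' : ℝ → Vec k} {a b : ℝ}
    (heq : ∀ t ∈ Set.Icc a b, s t = s' t) (h : AbsContOn s' a b) : AbsContOn s a b := by
  intro ε hε
  obtain ⟨δ, hδ, hP⟩ := h ε hε
  refine ⟨δ, hδ, fun I hI hd hl => ?_⟩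
  have he : ∀ i, ‖s (I i).2 - s (I i).1‖ = ‖s' (I i).2 - s' (I i).1‖ := by
    intro i
    rw [heq _ ⟨le_trans (hI i).1 (hI i).2.1, (hI i).2.2⟩,
        heq _ ⟨(hI i).1, le_trans (hI i).2.1 (hI i).2.2⟩]
  rw [tsum_congr he]
  exact hP I hI hd hl

lemma my_acon_shift {k : ℕ} {s s' : ℝ → Vec k} {a b T : ℝ}
    (hs : ∀ t, s' t = s (t - T))
    (h : AbsContOn s (a - T) (b - T)) : AbsContOn s' a b := by
  intro ε hε
  obtain ⟨δ, hδ, hP⟩ := h ε hε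
  refine ⟨δ, hδ, fun I hI hd hl => ?_⟩
  have hpre : ∀ x y : ℝ, Set.Ioo (x - T) (y - T) = (· + T) ⁻¹' Set.Ioo x y := by
    intro x y; ext z
    simp only [Set.mem_preimage, Set.mem_Ioo]
    constructor <;> (rintro ⟨h1, h2⟩; exact ⟨by linarith, by linarith⟩)
  have := hP (fun i => ((I i).1 - T, (I i).2 - T))
    (fun i => ⟨by dsimp only; linarith [(hI i).1], by dsimp only; linarith [(hI i).2.1],
      by dsimp only; linarith [(hI i).2.2]⟩)
    (fun i i' hii => by
      simp only [hpre]
      exact Disjoint.preimage _ (hd i i' hii))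
    (by
      calc (∑' i, ((I i).2 - T - ((I i).1 - T))) = ∑' i, ((I i).2 - (I i).1) :=
            tsum_congr (fun i => by ring)
        _ ≤ δ := hl)
  have he : ∀ i : ℕ, ‖s' (I i).2 - s' (I i).1‖ = ‖s ((I i).2 - T) - s ((I i).1 - T)‖ := by
    intro i; rw [hs, hs]
  rw [tsum_congr he]
  exact this

lemma my_acon_glue {k : ℕ} {s : ℝ → Vec k} {a c b : ℝ} (hac : a ≤ c) (hcb : c ≤ b)
    (h1 : AbsContOn s a c) (h2 : AbsContOn s c b) : AbsContOn s a b := by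
  intro ε hε
  have hε2 : 0 < ε / 2 := by linarith
  obtain ⟨δ₁, hδ₁, hP₁⟩ := my_acon_finsum hac h1 hε2
  obtain ⟨δ₂, hδ₂, hP₂⟩ := my_acon_finsum hcb h2 hε2
  refine ⟨min δ₁ δ₂, lt_min hδ₁ hδ₂, fun I hI hd hl => ?_⟩
  have hsumlen : Summable (fun i => (I i).2 - (I i).1) := my_summable_len hI hd
  -- lower split
  have hsub1 : ∀ i, Set.Ioo (min (I i).1 c) (min (I i).2 c) ⊆ Set.Ioo (I i).1 (I i).2 := by
    intro i z hz
    obtain ⟨h1z, h2z⟩ := hz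
    have hzc : z < c := lt_of_lt_of_le h2z (min_le_right _ _)
    have hzy : z < (I i).2 := lt_of_lt_of_le h2z (min_le_left _ _)
    have hx : (I i).1 < z := by
      rcases le_total (I i).1 c with hh | hh
      · rwa [min_eq_left hh] at h1z
      · rw [min_eq_right hh] at h1z; linarith
    exact ⟨hx, hzy⟩
  have hsub2 : ∀ i, Set.Ioo (max (I i).1 c) (max (I i).2 c) ⊆ Set.Ioo (I i).1 (I i).2 := by
    intro i z hz
    obtain ⟨h1z, h2z⟩ := hz
    have hcz : c < z := lt_of_le_of_lt (le_max_right _ _) h1z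
    have hxz : (I i).1 < z := lt_of_le_of_lt (le_max_left _ _) h1z
    have hy : z < (I i).2 := by
      rcases le_total c (I i).2 with hh | hh
      · rwa [max_eq_left hh] at h2z
      · rw [max_eq_right hh] at h2z; linarith
    exact ⟨hxz, hy⟩
  have hc1 : ∀ i, a ≤ min (I i).1 c ∧ min (I i).1 c ≤ min (I i).2 c ∧ min (I i).2 c ≤ c :=
    fun i => ⟨le_min (hI i).1 hac, min_le_min (hI i).2.1 le_rfl, min_le_right _ _⟩
  have hc2 : ∀ i, c ≤ max (I i).1 c ∧ max (I i).1 c ≤ max (I i).2 c ∧ max (I i).2 c ≤ b :=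
    fun i => ⟨le_max_right _ _, max_le_max (hI i).2.1 le_rfl, max_le (hI i).2.2 hcb⟩
  have hlen1 : Summable (fun i => min (I i).2 c - min (I i).1 c) ∧
      (∑' i, (min (I i).2 c - min (I i).1 c)) ≤ δ₁ := by
    have hle : ∀ i, min (I i).2 c - min (I i).1 c ≤ (I i).2 - (I i).1 := by
      intro i
      rcases le_total (I i).2 c with hh | hh
      · rw [min_eq_left hh, min_eq_left (le_trans (hI i).2.1 hh)]
      · rcases le_total (I i).1 c with hh' | hh'
        · rw [min_eq_right hh, min_eq_left hh']; linarith
        · rw [min_eq_right hh, min_eq_right hh']; linarith [(hI i).2.1]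
    have hnn : ∀ i, 0 ≤ min (I i).2 c - min (I i).1 c :=
      fun i => by linarith [min_le_min (hI i).2.1 (le_refl c), (hc1 i).2.1]
    have hsum : Summable (fun i => min (I i).2 c - min (I i).1 c) :=
      Summable.of_nonneg_of_le hnn hle hsumlen
    exact ⟨hsum, le_trans (Summable.tsum_le_tsum hle hsum hsumlen)
      (le_trans hl (min_le_left _ _))⟩
  have hlen2 : Summable (fun i => max (I i).2 c - max (I i).1 c) ∧
      (∑' i, (max (I i).2 c - max (I i).1 c)) ≤ δ₂ := by
    have hle : ∀ i, max (I i).2 c - max (I i).1 c ≤ (I i).2 - (I i).1 := by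
      intro i
      rcases le_total c (I i).1 with hh | hh
      · rw [max_eq_left hh, max_eq_left (le_trans hh (hI i).2.1)]
      · rcases le_total c (I i).2 with hh' | hh'
        · rw [max_eq_left hh', max_eq_right hh]; linarith
        · rw [max_eq_right hh', max_eq_right hh]; linarith [(hI i).2.1]
    have hnn : ∀ i, 0 ≤ max (I i).2 c - max (I i).1 c :=
      fun i => by linarith [(hc2 i).2.1]
    have hsum : Summable (fun i => max (I i).2 c - max (I i).1 c) :=
      Summable.of_nonneg_of_le hnn hle hsumlen
    exact ⟨hsum, le_trans (Summable.tsum_le_tsum hle hsum hsumlen)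
      (le_trans hl (min_le_right _ _))⟩
  have hA := hP₁ (fun i => (min (I i).1 c, min (I i).2 c)) hc1
    (fun i i' hii => Disjoint.mono (hsub1 i) (hsub1 i') (hd i i' hii)) hlen1.2
  have hB := hP₂ (fun i => (max (I i).1 c, max (I i).2 c)) hc2
    (fun i i' hii => Disjoint.mono (hsub2 i) (hsub2 i') (hd i i' hii)) hlen2.2
  have hpt : ∀ i, ‖s (I i).2 - s (I i).1‖ ≤
      ‖s (max (I i).2 c) - s (max (I i).1 c)‖ + ‖s (min (I i).2 c) - s (min (I i).1 c)‖ := by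
    intro i
    have hid : s (I i).2 - s (I i).1 =
        (s (max (I i).2 c) - s (max (I i).1 c)) + (s (min (I i).2 c) - s (min (I i).1 c)) := by
      rcases le_total (I i).2 c with hh | hh
      · rw [max_eq_right hh, max_eq_right (le_trans (hI i).2.1 hh),
          min_eq_left hh, min_eq_left (le_trans (hI i).2.1 hh)]
        abel
      · rcases le_total (I i).1 c with hh' | hh'
        · rw [max_eq_left hh, max_eq_right hh', min_eq_right hh, min_eq_left hh']
          abel
        · rw [max_eq_left hh, max_eq_left hh', min_eq_right hh, min_eq_right hh']
          abel
    rw [hid]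
    exact norm_add_le _ _
  have hsumL : Summable (fun i => ‖s (I i).2 - s (I i).1‖) :=
    Summable.of_nonneg_of_le (fun i => norm_nonneg _) hpt (hB.1.add hA.1)
  calc (∑' i, ‖s (I i).2 - s (I i).1‖)
      ≤ ∑' i, (‖s (max (I i).2 c) - s (max (I i).1 c)‖ +
          ‖s (min (I i).2 c) - s (min (I i).1 c)‖) :=
        Summable.tsum_le_tsum hpt hsumL (hB.1.add hA.1)
    _ = (∑' i, ‖s (max (I i).2 c) - s (max (I i).1 c)‖) +
        ∑' i, ‖s (min (I i).2 c) - s (min (I i).1 c)‖ := Summable.tsum_add hB.1 hA.1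
    _ ≤ ε / 2 + ε / 2 := add_le_add hB.2 hA.2
    _ = ε := by ring

lemma my_chtd_nonneg {E : Set (ℝ × ℕ)} (h : IsCompactHTD E) : ∀ p ∈ E, 0 ≤ p.1 := by
  obtain ⟨J, t, h0, hm, hE⟩ := h
  have ht : ∀ i, i ≤ J + 1 → 0 ≤ t i := by
    intro i
    induction i with
    | zero => intro _; exact h0.ge
    | succ n ih => intro hn; exact le_trans (ih (by omega)) (hm n (by omega))
  intro p hp
  rw [hE] at hp
  simp only [Set.mem_iUnion] at hp
  obtain ⟨i, hi, hp⟩ := hp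
  have hiJ : i ≤ J := by simpa [Nat.lt_succ_iff] using Finset.mem_range.1 hi
  exact le_trans (ht i (by omega)) hp.1.1

lemma my_htd_nonneg {E : Set (ℝ × ℕ)} (h : IsHTD E) : ∀ p ∈ E, 0 ≤ p.1 := by
  obtain ⟨F, hF, _, hE⟩ := h
  intro p hp
  rw [hE] at hp
  obtain ⟨k, hk⟩ := Set.mem_iUnion.1 hp
  exact my_chtd_nonneg (hF k) p hk

lemma my_htd_zero {E : Set (ℝ × ℕ)} (h : IsHTD E) : ((0 : ℝ), (0 : ℕ)) ∈ E := by
  obtain ⟨F, hF, _, hE⟩ := h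
  obtain ⟨J, t, h0, hm, hFe⟩ := hF 0
  rw [hE]
  apply Set.mem_iUnion.2 ⟨0, ?_⟩
  rw [hFe]
  simp only [Set.mem_iUnion]
  refine ⟨0, by simp, ⟨⟨h0.le, ?_⟩, rfl⟩⟩
  rw [← h0]; exact hm 0 (Nat.zero_le _)

end MyHelpers

/-- Lemma 8: if `φ₁` and `φ₂` are hybrid arcs with `φ₁(T,J) = φ₂(0,0)` where
`(T,J) = max dom φ₁`, the concatenation `φ = φ₁|φ₂` is locally absolutely continuous
on each time slice `I^j_φ` of its domain. -/
theorem concat_arc_loc_abs_cont {n : ℕ}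
    (φ₁ φ₂ φ : ℝ → ℕ → Vec n) (E₁ E₂ E : Set (ℝ × ℕ)) (T : ℝ) (J : ℕ)
    (h₁ : IsHybridArc φ₁ E₁)
    (h₂ : IsHybridArc φ₂ E₂)
    (hcpt : IsCompactHTD E₁)
    (hmax : IsMaxOf E₁ T J)
    (hend : φ₁ T J = φ₂ 0 0)
    (hcat : IsConcat T J φ₁ E₁ φ₂ E₂ φ E) :
    ∀ j : ℕ, LocAbsContOn (fun t => φ t j) (Slice E j) := by
  obtain ⟨hE, hφ1, hφ2⟩ := hcat
  have hE2nn : ∀ q ∈ E₂, 0 ≤ q.1 := my_htd_nonneg h₂.1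
  have hE200 : ((0 : ℝ), (0 : ℕ)) ∈ E₂ := my_htd_zero h₂.1
  have hTJshift : ((T, J) : ℝ × ℕ) ∈ Shift E₂ T J := ⟨(0, 0), hE200, by simp⟩
  have hφTJ : φ T J = φ₁ T J := by
    have := hφ2 (T, J) hTJshift
    simp only [sub_self, Nat.sub_self] at this
    rw [this, hend]
  intro j a b hab hsub
  rcases lt_trichotomy j J with hj | hj | hj
  · -- j < J : the slice lies in E₁
    have hs1 : ∀ t ∈ Set.Icc a b, (t, j) ∈ E₁ := by
      intro t ht
      have hm := hsub ht
      rw [Slice, Set.mem_setOf_eq, hE] at hm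
      rcases hm with hm | hm
      · exact hm
      · obtain ⟨q, _, heq⟩ := hm
        have : j = q.2 + J := congrArg Prod.snd heq
        omega
    have heqφ : ∀ t ∈ Set.Icc a b, φ t j = φ₁ t j := by
      intro t ht
      refine hφ1 (t, j) (hs1 t ht) ?_
      intro hcontra
      have : j = J := congrArg Prod.snd hcontra
      omega
    exact my_acon_congr heqφ (h₁.2 j a b hab (fun t ht => hs1 t ht))
  · -- j = J : split at T
    subst hj
    have HA : ∀ a' b' : ℝ, a' ≤ b' → b' ≤ T → Set.Icc a' b' ⊆ Slice E j →
        AbsContOn (fun t => φ t j) a' b' := by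
      intro a' b' hab' hbT hsub'
      have hs1 : ∀ t ∈ Set.Icc a' b', (t, j) ∈ E₁ := by
        intro t ht
        have hm := hsub' ht
        rw [Slice, Set.mem_setOf_eq, hE] at hm
        rcases hm with hm | hm
        · exact hm
        · obtain ⟨q, hq, heq⟩ := hm
          have h1 : t = q.1 + T := congrArg Prod.fst heq
          have hTt : T ≤ t := by have := hE2nn q hq; linarith
          have : t = T := le_antisymm (le_trans ht.2 hbT) hTt
          rw [this]; exact hmax.1
      have heqφ : ∀ t ∈ Set.Icc a' b', φ t j = φ₁ t j := by
        intro t ht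
        by_cases hT : t = T
        · rw [hT]; exact hφTJ
        · exact hφ1 (t, j) (hs1 t ht) (by
            intro hcontra
            exact hT (congrArg Prod.fst hcontra))
      exact my_acon_congr heqφ (h₁.2 j a' b' hab' (fun t ht => hs1 t ht))
    have HB : ∀ a' b' : ℝ, a' ≤ b' → T ≤ a' → Set.Icc a' b' ⊆ Slice E j →
        AbsContOn (fun t => φ t j) a' b' := by
      intro a' b' hab' hTa hsub'
      have hs2 : ∀ t ∈ Set.Icc a' b', (t - T, (0 : ℕ)) ∈ E₂ := by
        intro t ht
        have hm := hsub' ht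
        rw [Slice, Set.mem_setOf_eq, hE] at hm
        rcases hm with hm | hm
        · have : t = T := le_antisymm (hmax.2 _ hm).1 (le_trans hTa ht.1)
          rw [this]; simpa using hE200
        · obtain ⟨q, hq, heq⟩ := hm
          have h1 : t = q.1 + T := congrArg Prod.fst heq
          have h2 : j = q.2 + j := congrArg Prod.snd heq
          have hq2 : q.2 = 0 := by omega
          have hqe : q = (t - T, (0 : ℕ)) := by
            rcases q with ⟨q1, q2⟩
            simp only [Prod.mk.injEq]
            exact ⟨by simp at h1 ⊢; linarith, by simpa using hq2⟩
          rwa [hqe] at hq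
      have heqφ : ∀ t ∈ Set.Icc a' b', φ t j = φ₂ (t - T) 0 := by
        intro t ht
        have hm : ((t, j) : ℝ × ℕ) ∈ Shift E₂ T j :=
          ⟨(t - T, 0), hs2 t ht, by simp⟩
        have := hφ2 (t, j) hm
        simpa using this
      have hacon2 : AbsContOn (fun t => φ₂ t 0) (a' - T) (b' - T) := by
        refine h₂.2 0 (a' - T) (b' - T) (by linarith) ?_
        intro u hu
        have := hs2 (u + T) ⟨by linarith [hu.1], by linarith [hu.2]⟩
        simpa [Slice] using this
      exact my_acon_congr heqφ (my_acon_shift (a := a') (b := b') (T := T) (s := fun t => φ₂ t 0) (fun _ => rfl) hacon2)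
    rcases le_total b T with hbT | hTb
    · exact HA a b hab hbT hsub
    · rcases le_total T a with hTa | haT
      · exact HB a b hab hTa hsub
      · exact my_acon_glue haT hTb
          (HA a T haT le_rfl (fun t ht => hsub ⟨ht.1, le_trans ht.2 hTb⟩))
          (HB T b hTb le_rfl (fun t ht => hsub ⟨le_trans haT ht.1, ht.2⟩))
  · -- j > J : the slice lies in the shifted part
    have hs2 : ∀ t ∈ Set.Icc a b, (t - T, j - J) ∈ E₂ := by
      intro t ht
      have hm := hsub ht
      rw [Slice, Set.mem_setOf_eq, hE] at hm
      rcases hm with hm | hm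
      · have := (hmax.2 _ hm).2
        omega
      · obtain ⟨q, hq, heq⟩ := hm
        have h1 : t = q.1 + T := congrArg Prod.fst heq
        have h2 : j = q.2 + J := congrArg Prod.snd heq
        have hqe : q = (t - T, j - J) := by
          rcases q with ⟨q1, q2⟩
          simp only [Prod.mk.injEq]
          exact ⟨by simp at h1 ⊢; linarith, by simp at h2 ⊢; omega⟩
        rwa [hqe] at hq
    have heqφ : ∀ t ∈ Set.Icc a b, φ t j = φ₂ (t - T) (j - J) := by
      intro t ht
      have hm : ((t, j) : ℝ × ℕ) ∈ Shift E₂ T J :=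
        ⟨(t - T, j - J), hs2 t ht, by
          simp only [Prod.mk.injEq]
          exact ⟨by ring, by omega⟩⟩
      exact hφ2 (t, j) hm
    have hacon2 : AbsContOn (fun t => φ₂ t (j - J)) (a - T) (b - T) := by
      refine h₂.2 (j - J) (a - T) (b - T) (by linarith) ?_
      intro u hu
      have := hs2 (u + T) ⟨by linarith [hu.1], by linarith [hu.2]⟩
      simpa [Slice] using this
    exact my_acon_congr heqφ (my_acon_shift (a := a) (b := b) (T := T) (s := fun t => φ₂ t (j - J)) (fun _ => rfl) hacon2)
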